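/- Let G be a connected finite graph with maximum degree at most Δ and suppose λ_j(G) ≤ 0 for some j ≥ 1. Then G has at most j²Δ²/2 edges. -/

import Mathlib

open Matrix SimpleGraph Finset
open scoped Classical RealInnerProductSpace

noncomputable section

/-- The adjacency matrix of a graph is Hermitian (real symmetric). -/
lemma adjHerm {V : Type} [Fintype V] [DecidableEq V] (G : SimpleGraph V) :
    (G.adjMatrix ℝ).IsHermitian := by
  have h := G.isSymm_adjMatrix (α := ℝ)
  simpa [Matrix.IsHermitian, Matrix.conjTranspose_eq_transpose_of_trivial] using h

/-- The spectral radius (largest adjacency eigenvalue) `λ₁(G)` of a graph. -/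
def specRad {V : Type} [Fintype V] [DecidableEq V] (G : SimpleGraph V) : ℝ :=
  ⨆ i, (adjHerm G).eigenvalues i

/-- The `j`-th largest adjacency eigenvalue of `G` (1-indexed, with multiplicity):
entry `card V - j` of the increasingly sorted list of eigenvalues. -/
def nthEig {V : Type} [Fintype V] [DecidableEq V] (G : SimpleGraph V) (j : ℕ) : ℝ :=
  (Multiset.sort (Finset.univ.val.map (adjHerm G).eigenvalues) (· ≤ ·)).getD
    (Fintype.card V - j) 0

/-- The multiplicity of `μ` as an adjacency eigenvalue of `G`. -/
def eigMult {V : Type} [Fintype V] [DecidableEq V] (G : SimpleGraph V) (μ : ℝ) : ℕ :=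
  Module.finrank ℝ (Module.End.eigenspace (Matrix.toLin' (G.adjMatrix ℝ)) μ)

/-- The ball of radius `r` around `v`: all vertices at graph distance at most `r` from `v`. -/
def ball {V : Type} (G : SimpleGraph V) (v : V) (r : ℕ) : Set V := {u | G.dist v u ≤ r}

lemma herm_trace_eq {n : Type} [Fintype n] [DecidableEq n] {A : Matrix n n ℝ}
    (hA : A.IsHermitian) : A.trace = ∑ i, hA.eigenvalues i := by
  conv_lhs => rw [hA.spectral_theorem, Unitary.conjStarAlgAut_apply]
  rw [Matrix.trace_mul_cycle,
    (Matrix.mem_unitaryGroup_iff').mp (hA.eigenvectorUnitary).2, Matrix.one_mul,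
    Matrix.trace_diagonal]
  simp

lemma herm_trace_sq {n : Type} [Fintype n] [DecidableEq n] {A : Matrix n n ℝ}
    (hA : A.IsHermitian) : (A * A).trace = ∑ i, hA.eigenvalues i ^ 2 := by
  set U : Matrix n n ℝ := (hA.eigenvectorUnitary : Matrix n n ℝ) with hUdef
  set D : Matrix n n ℝ := Matrix.diagonal (RCLike.ofReal ∘ hA.eigenvalues) with hDdef
  have hU : star U * U = 1 := (Matrix.mem_unitaryGroup_iff').mp (hA.eigenvectorUnitary).2
  have h1 : A * A = U * (D * D) * star U := by
    conv_lhs => rw [hA.spectral_theorem]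
    show (U * D * star U) * (U * D * star U) = _
    calc (U * D * star U) * (U * D * star U)
        = U * D * (star U * U) * (D * star U) := by noncomm_ring
      _ = U * (D * D) * star U := by rw [hU]; noncomm_ring
  rw [h1, Matrix.trace_mul_cycle, ← Matrix.mul_assoc, hU, Matrix.one_mul]
  simp [hDdef, Matrix.diagonal_mul_diagonal, Matrix.trace_diagonal, sq]

lemma hasEig {n : Type} [Fintype n] [DecidableEq n] {A : Matrix n n ℝ}
    (hA : A.IsHermitian) (i : n) :
    Module.End.HasEigenvalue (Matrix.toLin' A) (hA.eigenvalues i) := by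
  apply Module.End.hasEigenvalue_of_hasEigenvector (x := ⇑(hA.eigenvectorBasis i))
  constructor
  · rw [Module.End.mem_eigenspace_iff]
    ext x
    have := congrFun (hA.mulVec_eigenvectorBasis i) x
    simpa [Matrix.toLin'_apply] using this
  · intro h
    apply hA.eigenvectorBasis.orthonormal.ne_zero i
    ext x
    exact congrFun h x

/-- Every adjacency eigenvalue is bounded in absolute value by the maximum degree. -/
lemma abs_eig_le {V : Type} [Fintype V] [DecidableEq V] (G : SimpleGraph V) {Δ : ℕ}
    (hΔ : G.maxDegree ≤ Δ) (i : V) : |(adjHerm G).eigenvalues i| ≤ (Δ : ℝ) := by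
  obtain ⟨k, hk⟩ := eigenvalue_mem_ball (hasEig (adjHerm G) i)
  rw [Metric.mem_closedBall, Real.dist_eq] at hk
  have hdiag : G.adjMatrix ℝ k k = 0 := by simp
  rw [hdiag, sub_zero] at hk
  refine hk.trans ?_
  have h1 : ∀ x ∈ Finset.univ.erase k, ‖G.adjMatrix ℝ k x‖ = G.adjMatrix ℝ k x := by
    intro x _
    rw [Real.norm_eq_abs, abs_of_nonneg]
    simp [SimpleGraph.adjMatrix_apply]
    positivity
  rw [Finset.sum_congr rfl h1]
  have h2 : ∑ x ∈ Finset.univ.erase k, G.adjMatrix ℝ k x = ∑ x, G.adjMatrix ℝ k x := by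
    apply Finset.sum_subset (Finset.erase_subset _ _)
    intro x _ hx
    have : x = k := by simpa using hx
    simp [this]
  rw [h2]
  have h3 : ∑ x, G.adjMatrix ℝ k x = (G.degree k : ℝ) := by
    simp [SimpleGraph.adjMatrix_apply, SimpleGraph.degree, SimpleGraph.neighborFinset_eq_filter]
  rw [h3]
  exact_mod_cast (G.degree_le_maxDegree k).trans hΔ

/-- If the `j`-th largest eigenvalue is `≤ 0`, then at most `j - 1` eigenvalues are positive. -/
lemma count_pos_le {V : Type} [Fintype V] [DecidableEq V] (G : SimpleGraph V) {j : ℕ}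
    (hj : 1 ≤ j) (hjn : j ≤ Fintype.card V) (hneg : nthEig G j ≤ 0) :
    (Finset.univ.filter (fun i => 0 < (adjHerm G).eigenvalues i)).card ≤ j - 1 := by
  classical
  set m : Multiset ℝ := Finset.univ.val.map (adjHerm G).eigenvalues with hm
  set l : List ℝ := Multiset.sort m (· ≤ ·) with hl
  have hlen : l.length = Fintype.card V := by
    rw [hl, Multiset.length_sort, hm, Multiset.card_map]
    simp [Finset.card_univ]
  have hn : 0 < Fintype.card V := lt_of_lt_of_le hj hjn
  have hidx : Fintype.card V - j < l.length := by
    rw [hlen]; exact Nat.sub_lt hn hj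
  have hsorted : l.Pairwise (· ≤ ·) := Multiset.pairwise_sort _ _
  have hle : l[Fintype.card V - j] ≤ 0 := by
    have : nthEig G j = l[Fintype.card V - j] := List.getD_eq_getElem l 0 hidx
    rwa [this] at hneg
  -- count positive entries
  have hcard : (Finset.univ.filter (fun i => 0 < (adjHerm G).eigenvalues i)).card
      = l.countP (fun x => decide (0 < x)) := by
    have h1 : Multiset.countP (fun x => 0 < x) m = l.countP (fun x => decide (0 < x)) := by
      conv_lhs => rw [← Multiset.sort_eq m (· ≤ ·)]
      exact Multiset.coe_countP _ _
    rw [← h1, hm, Multiset.countP_map, Finset.card, Finset.filter_val]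
  rw [hcard]
  have hsplit : l = l.take (Fintype.card V - j + 1) ++ l.drop (Fintype.card V - j + 1) :=
    (List.take_append_drop _ _).symm
  rw [hsplit, List.countP_append]
  have htake : (l.take (Fintype.card V - j + 1)).countP (fun x => decide (0 < x)) = 0 := by
    rw [List.countP_eq_zero]
    intro x hx
    rw [List.mem_take_iff_getElem] at hx
    obtain ⟨i, hi, rfl⟩ := hx
    simp only [decide_eq_true_eq, not_lt]
    have hij : i ≤ Fintype.card V - j := by omega
    rcases eq_or_lt_of_le hij with h | h
    · subst h; exact hle
    · exact le_trans (List.pairwise_iff_getElem.mp hsorted i _ _ hidx h) hle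
  rw [htake, zero_add]
  calc (l.drop (Fintype.card V - j + 1)).countP _ ≤ (l.drop (Fintype.card V - j + 1)).length :=
        List.countP_le_length
    _ = l.length - (Fintype.card V - j + 1) := List.length_drop
    _ ≤ j - 1 := by rw [hlen]; omega

/-- A connected graph with maximum degree at most `Δ` and `λ_j(G) ≤ 0` for some `j ≥ 1`
has at most `j²Δ²/2` edges. -/
theorem stmt14 {V : Type} [Fintype V] [DecidableEq V] (G : SimpleGraph V)
    (hG : G.Connected) (Δ j : ℕ) (hΔ : G.maxDegree ≤ Δ)
    (hj : 1 ≤ j) (hjn : j ≤ Fintype.card V) (hneg : nthEig G j ≤ 0) :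
    (G.edgeFinset.card : ℝ) ≤ (j : ℝ) ^ 2 * (Δ : ℝ) ^ 2 / 2 := by
  classical
  set f : V → ℝ := (adjHerm G).eigenvalues with hf
  have habs : ∀ i, |f i| ≤ (Δ : ℝ) := abs_eig_le G hΔ
  -- trace zero
  have htr0 : ∑ i, f i = 0 := by
    have := herm_trace_eq (adjHerm G)
    rw [SimpleGraph.trace_adjMatrix] at this
    exact this.symm
  -- sum of squares = 2 * edges
  have h2E : ∑ i, f i ^ 2 = 2 * (G.edgeFinset.card : ℝ) := by
    have h1 := herm_trace_sq (adjHerm G)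
    have h2 : (G.adjMatrix ℝ * G.adjMatrix ℝ).trace = (∑ v, G.degree v : ℕ) := by
      rw [Matrix.trace]
      push_cast
      apply Finset.sum_congr rfl
      intro v _
      exact G.adjMatrix_mul_self_apply_self v
    rw [h2] at h1
    rw [← h1, SimpleGraph.sum_degrees_eq_twice_card_edges]
    push_cast
    ring
  set P : Finset V := Finset.univ.filter (fun i => 0 < f i) with hP
  set N : Finset V := Finset.univ.filter (fun i => ¬ 0 < f i) with hN
  have hPcard : (P.card : ℝ) ≤ (j : ℝ) - 1 := by
    have := count_pos_le G hj hjn hneg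
    have h1 : (P.card : ℝ) ≤ ((j - 1 : ℕ) : ℝ) := by exact_mod_cast this
    refine h1.trans ?_
    have : ((j - 1 : ℕ) : ℝ) = (j : ℝ) - 1 := by
      have : 1 ≤ j := hj
      push_cast [Nat.cast_sub this]
      ring
    rw [this]
  have hΔ0 : (0 : ℝ) ≤ (Δ : ℝ) := Nat.cast_nonneg _
  -- positive part bounds
  have hPsum : ∑ i ∈ P, f i ≤ ((j : ℝ) - 1) * Δ := by
    calc ∑ i ∈ P, f i ≤ ∑ i ∈ P, (Δ : ℝ) :=
          Finset.sum_le_sum fun i _ => (le_abs_self _).trans (habs i)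
      _ = (P.card : ℝ) * Δ := by rw [Finset.sum_const]; simp [mul_comm]
      _ ≤ ((j : ℝ) - 1) * Δ := by apply mul_le_mul_of_nonneg_right hPcard hΔ0
  have hPsum0 : 0 ≤ ∑ i ∈ P, f i :=
    Finset.sum_nonneg fun i hi => le_of_lt (by simpa [hP] using (Finset.mem_filter.mp hi).2)
  have hPsq : ∑ i ∈ P, f i ^ 2 ≤ ((j : ℝ) - 1) * Δ ^ 2 := by
    calc ∑ i ∈ P, f i ^ 2 ≤ ∑ i ∈ P, (Δ : ℝ) ^ 2 := by
          apply Finset.sum_le_sum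
          intro i _
          rw [← sq_abs]
          exact pow_le_pow_left₀ (abs_nonneg _) (habs i) 2
      _ = (P.card : ℝ) * Δ ^ 2 := by rw [Finset.sum_const]; simp [mul_comm]
      _ ≤ ((j : ℝ) - 1) * Δ ^ 2 := mul_le_mul_of_nonneg_right hPcard (by positivity)
  -- negative part
  have hNsum : ∑ i ∈ N, (-f i) = ∑ i ∈ P, f i := by
    have := Finset.sum_filter_add_sum_filter_not Finset.univ (fun i => 0 < f i) f
    rw [htr0] at this
    have h1 : ∑ i ∈ N, (-f i) = -∑ i ∈ N, f i := by rw [Finset.sum_neg_distrib]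
    rw [h1]
    linarith [this]
  have hNsq : ∑ i ∈ N, f i ^ 2 ≤ (∑ i ∈ P, f i) ^ 2 := by
    have h1 : ∀ i ∈ N, 0 ≤ -f i := fun i hi => by
      have := (Finset.mem_filter.mp hi).2
      simp only [not_lt] at this
      linarith
    calc ∑ i ∈ N, f i ^ 2 = ∑ i ∈ N, (-f i) ^ 2 := by simp
      _ ≤ (∑ i ∈ N, (-f i)) ^ 2 := Finset.sum_sq_le_sq_sum_of_nonneg h1
      _ = (∑ i ∈ P, f i) ^ 2 := by rw [hNsum]
  have hPN : ∑ i ∈ P, f i ^ 2 + ∑ i ∈ N, f i ^ 2 = ∑ i, f i ^ 2 :=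
    Finset.sum_filter_add_sum_filter_not Finset.univ (fun i => 0 < f i) (fun i => f i ^ 2)
  have hfinal : 2 * (G.edgeFinset.card : ℝ)
      ≤ ((j : ℝ) - 1) * Δ ^ 2 + (((j : ℝ) - 1) * Δ) ^ 2 := by
    rw [← h2E, ← hPN]
    have h1 : (∑ i ∈ P, f i) ^ 2 ≤ (((j : ℝ) - 1) * Δ) ^ 2 := by
      apply pow_le_pow_left₀ hPsum0 hPsum
    linarith [hNsq.trans h1]
  have hj1 : (1 : ℝ) ≤ (j : ℝ) := by exact_mod_cast hj
  nlinarith [sq_nonneg ((j : ℝ) - 1), sq_nonneg (Δ : ℝ), mul_nonneg (sub_nonneg.mpr hj1) (sq_nonneg (Δ:ℝ))]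

end
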